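/- Let k ≥ 1 be an integer and let G = (V,E) be a (k,0)-sparse hypergraph. Then G has at most one component: any two components of G are equal. -/
import Mathlib


/-- The number of edges of the multiset `E` spanned by the vertex set `W`. -/
def spanCount {V : Type*} [DecidableEq V] (E : Multiset (Finset V)) (W : Finset V) : ℕ :=
  (E.filter fun e => e ⊆ W).card

/-- A hypergraph with edge multiset `E` is `(k,ℓ)`-sparse if every vertex subset spanning
at least one edge spans at most `k|W| - ℓ` edges. -/
def Sparse {V : Type*} [DecidableEq V] (k l : ℕ) (E : Multiset (Finset V)) : Prop :=
  ∀ W : Finset V, 1 ≤ spanCount E W → spanCount E W + l ≤ k * W.card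

/-- A block of a sparse hypergraph: a vertex subset spanning at least one edge and
spanning exactly `k|W| - ℓ` edges. -/
def IsBlock {V : Type*} [DecidableEq V] (k l : ℕ) (E : Multiset (Finset V)) (W : Finset V) :
    Prop :=
  1 ≤ spanCount E W ∧ spanCount E W + l = k * W.card

/-- A component: an inclusion-maximal block. -/
def IsComponent {V : Type*} [DecidableEq V] (k l : ℕ) (E : Multiset (Finset V))
    (W : Finset V) : Prop :=
  IsBlock k l E W ∧ ∀ W' : Finset V, IsBlock k l E W' → W ⊆ W' → W' = W

/-- A `(k,0)`-sparse hypergraph has at most one component. -/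
theorem stmt_8 {V : Type*} [DecidableEq V] (k : ℕ) (hk : 1 ≤ k)
    (E : Multiset (Finset V)) (hne : ∀ e ∈ E, e.Nonempty) (hsp : Sparse k 0 E)
    (C₁ C₂ : Finset V) (hC₁ : IsComponent k 0 E C₁) (hC₂ : IsComponent k 0 E C₂) :
    C₁ = C₂ := by
  -- supermodularity of spanCount
  have hsuper : spanCount E C₁ + spanCount E C₂ ≤
      spanCount E (C₁ ∪ C₂) + spanCount E (C₁ ∩ C₂) := by
    unfold spanCount
    have h := Multiset.filter_add_filter (fun e => e ⊆ C₁) (fun e => e ⊆ C₂) E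
    have hcard : (E.filter fun e => e ⊆ C₁).card + (E.filter fun e => e ⊆ C₂).card
        = (E.filter fun e => e ⊆ C₁ ∨ e ⊆ C₂).card
          + (E.filter fun e => e ⊆ C₁ ∧ e ⊆ C₂).card := by
      rw [← Multiset.card_add, ← Multiset.card_add, h]
    rw [hcard]
    have h1 : (E.filter fun e => e ⊆ C₁ ∨ e ⊆ C₂).card ≤
        (E.filter fun e => e ⊆ C₁ ∪ C₂).card := by
      apply Multiset.card_le_card
      apply Multiset.monotone_filter_right
      intro e he
      rcases he with he | he
      · exact he.trans Finset.subset_union_left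
      · exact he.trans Finset.subset_union_right
    have h2 : (E.filter fun e => e ⊆ C₁ ∧ e ⊆ C₂) = (E.filter fun e => e ⊆ C₁ ∩ C₂) := by
      apply Multiset.filter_congr
      intro e _
      simp [Finset.subset_inter_iff]
    rw [h2] at *
    omega
  -- intersection span bound
  have hint : spanCount E (C₁ ∩ C₂) ≤ k * (C₁ ∩ C₂).card := by
    rcases Nat.eq_zero_or_pos (spanCount E (C₁ ∩ C₂)) with h | h
    · omega
    · have := hsp (C₁ ∩ C₂) h
      omega
  -- union is a block
  have hcards : C₁.card + C₂.card = (C₁ ∪ C₂).card + (C₁ ∩ C₂).card := by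
    exact (Finset.card_union_add_card_inter C₁ C₂).symm
  have hb1 := hC₁.1
  have hb2 := hC₂.1
  have hU1 : 1 ≤ spanCount E (C₁ ∪ C₂) := by
    have : spanCount E C₁ ≤ spanCount E (C₁ ∪ C₂) := by
      apply Multiset.card_le_card
      apply Multiset.monotone_filter_right
      intro e he
      exact he.trans Finset.subset_union_left
    exact le_trans hb1.1 this
  have hUle := hsp (C₁ ∪ C₂) hU1
  have hUge : k * (C₁ ∪ C₂).card ≤ spanCount E (C₁ ∪ C₂) := by
    have e1 : spanCount E C₁ + 0 = k * C₁.card := hb1.2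
    have e2 : spanCount E C₂ + 0 = k * C₂.card := hb2.2
    have : k * C₁.card + k * C₂.card = k * (C₁ ∪ C₂).card + k * (C₁ ∩ C₂).card := by
      rw [← Nat.mul_add, ← Nat.mul_add, hcards]
    linarith [hsuper, hint, e1, e2, this]
  have hUblock : IsBlock k 0 E (C₁ ∪ C₂) := ⟨hU1, by omega⟩
  have h1 := hC₁.2 (C₁ ∪ C₂) hUblock Finset.subset_union_left
  have h2 := hC₂.2 (C₁ ∪ C₂) hUblock Finset.subset_union_right
  exact h1.symm.trans h2
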